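/- Let c, d : ℕ×ℤ → ℚ be functions such that for every m ∈ ℕ the set {n ∈ ℤ : c(m,n) ≠ 0 or d(m,n) ≠ 0} is finite, and let A, B ∈ ℚ. Then in the ring of formal power series in p with coefficients in ℚ[y^{±1}][[q]] one has exp( Σ_{a≥1} Σ_{b≥1} Σ_{m≥0} Σ_{l∈ℤ} ( c(mb,l) + (b·l·A + b²·B)·d(mb,l) ) · p^{ab} y^{al} q^{am} / a ) = ∏_{b≥1, m≥0, l∈ℤ} (1 − p^{b} y^{l} q^{m})^{ −c(mb,l) − l·b·A·d(mb,l) − b²·B·d(mb,l) }, where for a rational exponent α one sets (1−t)^{α} := exp(α·log(1−t)), and both the sum and the product converge p-adically (each factor of the product is ≡ 1 modulo p). -/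

import Mathlib

open PowerSeries LaurentPolynomial

noncomputable section
namespace Formal

/-- The ring `ℚ[y^{±1}]` of Laurent polynomials in `y`. -/
abbrev L : Type := LaurentPolynomial ℚ

/-- The ring `ℚ[y^{±1}][[q]][[p]]` (outer variable `p`, inner variable `q`). -/
abbrev A3 : Type := PowerSeries (PowerSeries L)

/-- `log u := -∑_{k≥1} (1-u)^k / k` (valid coefficientwise when `constantCoeff u = 1`). -/
def log {R : Type*} [CommRing R] [Algebra ℚ R] (u : PowerSeries R) : PowerSeries R :=
  PowerSeries.mk fun N => ∑ k ∈ Finset.Icc 1 N, (-(k : ℚ)⁻¹) • coeff (R := R) N ((1 - u) ^ k)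

/-- `exp v := ∑_{k≥0} v^k / k!` (valid coefficientwise when `constantCoeff v = 0`). -/
def expS {R : Type*} [CommRing R] [Algebra ℚ R] (v : PowerSeries R) : PowerSeries R :=
  PowerSeries.mk fun N => ∑ k ∈ Finset.range (N + 1), ((k.factorial : ℚ)⁻¹) • coeff (R := R) N (v ^ k)

/-- Rational power `(1−t)^α := exp (α · log (1−t))`, for `u = 1−t` with constant term `1`. -/
def rpow {R : Type*} [CommRing R] [Algebra ℚ R] (u : PowerSeries R) (α : ℚ) : PowerSeries R :=
  expS (α • log u)

/-- The monomial `p^b q^m y^l` in `ℚ[y^{±1}][[q]][[p]]`. -/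
def mon (b m : ℕ) (l : ℤ) : A3 :=
  PowerSeries.C (R := PowerSeries L) (PowerSeries.C (R := L) (T l) * X ^ m) * X ^ b

section General
variable {R : Type*} [CommRing R] [Algebra ℚ R]

lemma coeff_eq_zero_of_X_pow_dvd {w : PowerSeries R} {k n : ℕ} (h : X ^ k ∣ w) (hn : n < k) :
    coeff (R := R) n w = 0 := by
  obtain ⟨t, rfl⟩ := h
  rw [mul_comm, coeff_mul_X_pow']
  simp [Nat.not_le.mpr hn]

lemma X_pow_dvd_pow {u : PowerSeries R} (h : constantCoeff (R := R) u = 0) (k : ℕ) :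
    X ^ k ∣ u ^ k :=
  pow_dvd_pow_of_dvd (X_dvd_iff.mpr h) k

lemma coeff_pow_eq_zero {u : PowerSeries R} (h : constantCoeff (R := R) u = 0) {n k : ℕ} (hn : n < k) :
    coeff (R := R) n (u ^ k) = 0 :=
  coeff_eq_zero_of_X_pow_dvd (X_pow_dvd_pow h k) hn

lemma expS_zero : expS (0 : PowerSeries R) = 1 := by
  ext N
  rw [expS, coeff_mk]
  rw [Finset.sum_eq_single 0]
  · simp [PowerSeries.coeff_one]
  · intro k _ hk
    rw [zero_pow hk]
    simp
  · simp

lemma sum_antidiag {M : Type*} [AddCommMonoid M] (N : ℕ) (F : ℕ → ℕ → M) :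
    ∑ k ∈ Finset.range (N+1), ∑ ij ∈ Finset.HasAntidiagonal.antidiagonal k, F ij.1 ij.2
      = ∑ ij ∈ (Finset.range (N+1) ×ˢ Finset.range (N+1)).filter (fun ij => ij.1 + ij.2 ≤ N),
          F ij.1 ij.2 := by
  rw [Finset.sum_sigma']
  apply Finset.sum_nbij' (i := fun x => (x.2.1, x.2.2)) (j := fun ij => ⟨ij.1 + ij.2, ij⟩)
  · intro x hx
    simp only [Finset.mem_sigma, Finset.mem_range, Finset.HasAntidiagonal.mem_antidiagonal] at hx
    simp only [Finset.mem_filter, Finset.mem_product, Finset.mem_range]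
    omega
  · intro x hx
    simp only [Finset.mem_filter, Finset.mem_product, Finset.mem_range] at hx
    exact Finset.mem_sigma.mpr ⟨Finset.mem_range.mpr (by show x.1 + x.2 < N + 1; omega), Finset.HasAntidiagonal.mem_antidiagonal.mpr rfl⟩
  · intro x hx
    simp only [Finset.mem_sigma, Finset.mem_range, Finset.HasAntidiagonal.mem_antidiagonal] at hx
    exact Sigma.ext (by simp [hx.2]) (by simp)
  · intro x hx; rfl
  · intro x hx; rfl

lemma coeff_expS_ext {w : PowerSeries R} (hw : constantCoeff (R := R) w = 0) {n N : ℕ} (hn : n ≤ N) :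
    coeff (R := R) n (expS w) = ∑ i ∈ Finset.range (N+1), ((i.factorial : ℚ)⁻¹) • coeff (R := R) n (w ^ i) := by
  rw [expS, coeff_mk]
  apply Finset.sum_subset
  · intro i hi; simp only [Finset.mem_range] at hi ⊢; omega
  · intro i _ hi
    simp only [Finset.mem_range, not_lt] at hi
    rw [coeff_pow_eq_zero hw (by omega), smul_zero]

lemma expS_add {u v : PowerSeries R} (hu : constantCoeff (R := R) u = 0)
    (hv : constantCoeff (R := R) v = 0) : expS (u + v) = expS u * expS v := by
  ext N
  have key : ∀ i j : ℕ, N < i + j → coeff (R := R) N (u ^ i * v ^ j) = 0 := by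
    intro i j h
    refine coeff_eq_zero_of_X_pow_dvd ?_ h
    rw [pow_add]
    exact mul_dvd_mul (X_pow_dvd_pow hu i) (X_pow_dvd_pow hv j)
  have hR : coeff (R := R) N (expS u * expS v)
      = ∑ ij ∈ Finset.range (N+1) ×ˢ Finset.range (N+1),
          ((ij.1.factorial : ℚ)⁻¹ * (ij.2.factorial : ℚ)⁻¹) • coeff (R := R) N (u ^ ij.1 * v ^ ij.2) := by
    rw [coeff_mul]
    have step1 : ∀ nm ∈ Finset.HasAntidiagonal.antidiagonal N,
        coeff (R := R) nm.1 (expS u) * coeff (R := R) nm.2 (expS v)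
        = ∑ ij ∈ Finset.range (N+1) ×ˢ Finset.range (N+1),
            ((ij.1.factorial : ℚ)⁻¹ * (ij.2.factorial : ℚ)⁻¹) •
              (coeff (R := R) nm.1 (u ^ ij.1) * coeff (R := R) nm.2 (v ^ ij.2)) := by
      intro nm hnm
      rw [coeff_expS_ext hu (Finset.HasAntidiagonal.antidiagonal.fst_le hnm),
          coeff_expS_ext hv (Finset.HasAntidiagonal.antidiagonal.snd_le hnm), Finset.sum_mul_sum,
          ← Finset.sum_product']
      apply Finset.sum_congr rfl
      intro ij _
      rw [smul_mul_smul_comm]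
    rw [Finset.sum_congr rfl step1, Finset.sum_comm]
    apply Finset.sum_congr rfl
    intro ij _
    rw [← Finset.smul_sum, coeff_mul]
  rw [hR, expS, coeff_mk]
  have hL : ∀ k ∈ Finset.range (N+1),
      ((k.factorial : ℚ)⁻¹) • coeff (R := R) N ((u + v) ^ k)
      = ∑ ij ∈ Finset.HasAntidiagonal.antidiagonal k,
          ((ij.1.factorial : ℚ)⁻¹ * (ij.2.factorial : ℚ)⁻¹) • coeff (R := R) N (u ^ ij.1 * v ^ ij.2) := by
    intro k _
    rw [add_pow, map_sum, Finset.smul_sum, Finset.Nat.sum_antidiagonal_eq_sum_range_succ_mk]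
    apply Finset.sum_congr rfl
    intro i hi
    simp only [Finset.mem_range] at hi
    have hik : i ≤ k := by omega
    have : coeff (R := R) N (u ^ i * v ^ (k - i) * ((k.choose i : ℕ) : PowerSeries R))
        = (k.choose i : ℕ) • coeff (R := R) N (u ^ i * v ^ (k - i)) := by
      rw [mul_comm (u ^ i * v ^ (k-i)) _, ← nsmul_eq_mul, map_nsmul]
    rw [this, ← Nat.cast_smul_eq_nsmul ℚ, smul_smul]
    congr 1
    rw [Nat.cast_choose ℚ hik]
    have f1 : (i.factorial : ℚ) ≠ 0 := Nat.cast_ne_zero.mpr i.factorial_ne_zero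
    have f2 : ((k - i).factorial : ℚ) ≠ 0 := Nat.cast_ne_zero.mpr (k - i).factorial_ne_zero
    have f3 : (k.factorial : ℚ) ≠ 0 := Nat.cast_ne_zero.mpr k.factorial_ne_zero
    field_simp
  rw [Finset.sum_congr rfl hL,
    sum_antidiag N (fun i j => ((i.factorial : ℚ)⁻¹ * (j.factorial : ℚ)⁻¹) • coeff (R := R) N (u ^ i * v ^ j))]
  apply Finset.sum_subset (Finset.filter_subset _ _)
  intro ij hij hij2
  simp only [Finset.mem_filter, Finset.mem_product, Finset.mem_range] at hij hij2
  rw [key ij.1 ij.2 (by omega), smul_zero]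

lemma constantCoeff_log (u : PowerSeries R) : constantCoeff (R := R) (log u) = 0 := by
  rw [log, ← coeff_zero_eq_constantCoeff, coeff_mk]
  simp

lemma constantCoeff_expS_arg_sum {ι : Type*} (s : Finset ι) (f : ι → PowerSeries R)
    (hf : ∀ i ∈ s, constantCoeff (R := R) (f i) = 0) :
    expS (∑ i ∈ s, f i) = ∏ i ∈ s, expS (f i) := by
  classical
  induction s using Finset.cons_induction with
  | empty => simp [expS_zero]
  | cons a s ha ih =>
    rw [Finset.sum_cons, Finset.prod_cons, expS_add (hf a (Finset.mem_cons_self a s))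
      (by rw [map_sum]; exact Finset.sum_eq_zero fun i hi => hf i (Finset.mem_cons_of_mem hi)),
      ih (fun i hi => hf i (Finset.mem_cons_of_mem hi))]

end General

lemma C_mul_T (r : ℚ) (n : ℤ) : (LaurentPolynomial.C r) * T n = r • T n := by
  rw [← single_eq_C_mul_T, T, AddMonoidAlgebra.smul_single, smul_eq_mul, mul_one]

lemma mon_pow (b m : ℕ) (l : ℤ) (k : ℕ) :
    (mon b m l) ^ k = PowerSeries.C (R := PowerSeries L) (PowerSeries.C (R := L) (T (k * l)) * X ^ (m * k)) * X ^ (b * k) := by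
  rw [mon, mul_pow, ← map_pow, mul_pow, ← map_pow, T_pow, ← pow_mul, ← pow_mul]

lemma coeff_C_mul_X_pow {R : Type*} [CommRing R] (a : R) (k n : ℕ) :
    coeff (R := R) n (PowerSeries.C (R := R) a * X ^ k) = if n = k then a else 0 := by
  rw [coeff_mul_X_pow']
  split_ifs with h1 h2 h2
  · rw [coeff_C, if_pos (by omega)]
  · rw [coeff_C, if_neg (by omega)]
  · omega
  · rfl

lemma coeff_mon_pow (b m : ℕ) (l : ℤ) (k n : ℕ) :
    coeff (R := PowerSeries L) n ((mon b m l) ^ k) =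
      if n = b * k then PowerSeries.C (R := L) (T (k * l)) * X ^ (m * k) else 0 := by
  rw [mon_pow, coeff_C_mul_X_pow]

/-- The key double-coefficient formula for `α • log (1 - mon b m l)`. -/
lemma coeff2_smul_log (α : ℚ) (b m : ℕ) (hb : 1 ≤ b) (l : ℤ) (n m' : ℕ) :
    coeff (R := L) m' (coeff (R := PowerSeries L) n (α • log (1 - mon b m l))) =
      if b ∣ n ∧ n ≠ 0 ∧ (n / b) * m = m' then
        (-α / ((n / b : ℕ) : ℚ)) • T (((n / b : ℕ) : ℤ) * l) else 0 := by
  rw [PowerSeries.coeff_smul, log, coeff_mk]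
  have h1 : (1 : A3) - (1 - mon b m l) = mon b m l := by ring
  rw [h1]
  by_cases h : b ∣ n ∧ n ≠ 0
  · obtain ⟨hd, hn0⟩ := h
    set k := n / b with hk
    have hkb : n = b * k := (Nat.div_mul_cancel hd).symm.trans (mul_comm _ _)
    have hk1 : 1 ≤ k := Nat.one_le_div_iff (by omega) |>.mpr (Nat.le_of_dvd (Nat.pos_of_ne_zero hn0) hd)
    have hkn : k ≤ n := Nat.div_le_self n b
    rw [Finset.sum_eq_single k]
    · rw [coeff_mon_pow, if_pos hkb, PowerSeries.coeff_smul, PowerSeries.coeff_smul]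
      have : coeff (R := L) m' (PowerSeries.C (R := L) (T ((k : ℤ) * l)) * X ^ (m * k)) =
          if m' = m * k then T ((k : ℤ) * l) else 0 := coeff_C_mul_X_pow _ _ _
      rw [this]
      by_cases hm : k * m = m'
      · rw [if_pos (hm.symm.trans (mul_comm k m)), if_pos ⟨hd, hn0, hm⟩, smul_smul]
        congr 1
        ring
      · rw [if_neg (fun hc => hm (by rw [hc, mul_comm])), if_neg (by tauto), smul_zero, smul_zero]
    · intro j hj hjk
      rw [coeff_mon_pow, if_neg, smul_zero]
      intro hc
      exact hjk (Nat.eq_of_mul_eq_mul_left (by omega) (hc.symm.trans hkb))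
    · intro hkmem
      exfalso
      apply hkmem
      simp only [Finset.mem_Icc]
      omega
  · rw [if_neg (by tauto)]
    have : ∀ j ∈ Finset.Icc 1 n, (-(j : ℚ)⁻¹) • coeff (R := PowerSeries L) n ((mon b m l) ^ j) = 0 := by
      intro j hj
      simp only [Finset.mem_Icc] at hj
      rw [coeff_mon_pow, if_neg, smul_zero]
      intro hc
      exact h ⟨Dvd.intro j hc.symm, by omega⟩
    rw [Finset.sum_congr rfl this, Finset.sum_const_zero, smul_zero, map_zero]

/-- Rectangle congruence: `u` and `v` agree in all double coefficients `(n, m)` with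
`n ≤ N`, `m ≤ M`. -/
def req (N M : ℕ) (u v : A3) : Prop :=
  ∀ n ≤ N, ∀ m ≤ M, coeff (R := L) m (coeff (R := PowerSeries L) n u) = coeff (R := L) m (coeff (R := PowerSeries L) n v)

lemma req_mul {N M : ℕ} {u v u' v' : A3} (h : req N M u u') (h' : req N M v v') :
    req N M (u * v) (u' * v') := by
  intro n hn m hm
  rw [coeff_mul, coeff_mul, map_sum, map_sum]
  apply Finset.sum_congr rfl
  intro ij hij
  rw [coeff_mul, coeff_mul]
  apply Finset.sum_congr rfl
  intro ab hab
  rw [h ij.1 (le_trans (Finset.HasAntidiagonal.antidiagonal.fst_le hij) hn) ab.1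
        (le_trans (Finset.HasAntidiagonal.antidiagonal.fst_le hab) hm),
      h' ij.2 (le_trans (Finset.HasAntidiagonal.antidiagonal.snd_le hij) hn) ab.2
        (le_trans (Finset.HasAntidiagonal.antidiagonal.snd_le hab) hm)]

lemma req_pow {N M : ℕ} {u u' : A3} (h : req N M u u') (k : ℕ) :
    req N M (u ^ k) (u' ^ k) := by
  induction k with
  | zero => intro n _ m _; rfl
  | succ k ih =>
    rw [pow_succ, pow_succ]
    exact req_mul ih h

lemma req_expS {N M : ℕ} {u u' : A3} (h : req N M u u') :
    coeff (R := L) M (coeff (R := PowerSeries L) N (expS u)) = coeff (R := L) M (coeff (R := PowerSeries L) N (expS u')) := by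
  rw [expS, expS, coeff_mk, coeff_mk, map_sum, map_sum]
  apply Finset.sum_congr rfl
  intro k _
  simp only [PowerSeries.coeff_smul]
  rw [req_pow h k N le_rfl M le_rfl]

lemma constantCoeff_smul_log {R : Type*} [CommRing R] [Algebra ℚ R] (α : ℚ) (u : PowerSeries R) :
    constantCoeff (R := R) (α • log u) = 0 := by
  rw [← coeff_zero_eq_constantCoeff, PowerSeries.coeff_smul, coeff_zero_eq_constantCoeff,
    constantCoeff_log, smul_zero]

/-- Auxiliary function: the `a`-th summand of the divisor sum. -/
def fdiv (c d : ℕ → ℤ → ℚ) (hfin : ∀ m : ℕ, {n : ℤ | c m n ≠ 0 ∨ d m n ≠ 0}.Finite)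
    (A B : ℚ) (n m' : ℕ) (a : ℕ) : L :=
  if a ∣ m' then
    ∑ l ∈ (hfin ((m' / a) * (n / a))).toFinset,
      ((c ((m' / a) * (n / a)) l +
          (((n / a : ℕ) : ℚ) * (l : ℚ) * A + ((n / a : ℕ) : ℚ) ^ 2 * B) *
            d ((m' / a) * (n / a)) l) / (a : ℚ)) • T ((a : ℤ) * l)
  else 0

/-- Let `c, d : ℕ×ℤ → ℚ` be such that for each `m` the set
`{n | c(m,n) ≠ 0 ∨ d(m,n) ≠ 0}` is finite, and let `A, B ∈ ℚ`.  Then in `ℚ[y^{±1}][[q]][[p]]`,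
`exp( ∑_{a,b≥1} ∑_{m≥0} ∑_{l∈ℤ} (c(mb,l) + (blA + b²B)d(mb,l)) p^{ab} y^{al} q^{am} / a )
 = ∏_{b≥1, m≥0, l∈ℤ} (1 − p^b y^l q^m)^{−c(mb,l) − lbA·d(mb,l) − b²B·d(mb,l)}`,
with `(1−t)^α := exp(α log(1−t))`.  Both sides converge `p`-adically (each factor of the
product is `≡ 1 mod p^b`): the sum is given coefficientwise (its `(p^N q^M)`-coefficient is a
finite sum over `a ∣ N`, `a ∣ M` with `b = N/a`, `m = M/a`, plus the finite sum over `l`, here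
expressed by `finsum`), and the `(p^N q^M)`-coefficient of the product only involves the
finitely many factors with `b ≤ N`, `m ≤ M` and `l` in the finite set given by the hypothesis
(all other factors equal `1`). -/
theorem statement3 (c d : ℕ → ℤ → ℚ)
    (hfin : ∀ m : ℕ, {n : ℤ | c m n ≠ 0 ∨ d m n ≠ 0}.Finite) (A B : ℚ) :
    expS (PowerSeries.mk fun N => PowerSeries.mk fun M =>
        ∑ a ∈ N.divisors.filter (· ∣ M), ∑ᶠ l : ℤ,
          LaurentPolynomial.C
              ((c ((M / a) * (N / a)) l +
                  (((N / a : ℕ) : ℚ) * (l : ℚ) * A + ((N / a : ℕ) : ℚ) ^ 2 * B) *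
                    d ((M / a) * (N / a)) l) / (a : ℚ)) *
            T ((a : ℤ) * l)) =
      (PowerSeries.mk fun N => PowerSeries.mk fun M =>
        coeff (R := L) M (coeff (R := PowerSeries L) N
          (∏ b ∈ Finset.Icc 1 N, ∏ m ∈ Finset.range (M + 1), ∏ l ∈ (hfin (m * b)).toFinset,
            rpow (1 - mon b m l)
              (-(c (m * b) l) - (l : ℚ) * (b : ℚ) * A * d (m * b) l -
                (b : ℚ) ^ 2 * B * d (m * b) l)))) := by
  refine PowerSeries.ext fun N => ?_
  refine PowerSeries.ext fun M => ?_
  rw [coeff_mk, coeff_mk]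
  have hprod : (∏ b ∈ Finset.Icc 1 N, ∏ m ∈ Finset.range (M + 1), ∏ l ∈ (hfin (m * b)).toFinset,
        rpow (1 - mon b m l)
          (-(c (m * b) l) - (l : ℚ) * (b : ℚ) * A * d (m * b) l -
            (b : ℚ) ^ 2 * B * d (m * b) l))
      = expS (∑ b ∈ Finset.Icc 1 N, ∑ m ∈ Finset.range (M + 1), ∑ l ∈ (hfin (m * b)).toFinset,
          (-(c (m * b) l) - (l : ℚ) * (b : ℚ) * A * d (m * b) l -
            (b : ℚ) ^ 2 * B * d (m * b) l) • log (1 - mon b m l)) := by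
    symm
    rw [constantCoeff_expS_arg_sum _ _ (fun b _ => by
      rw [map_sum]
      exact Finset.sum_eq_zero fun m _ => by
        rw [map_sum]
        exact Finset.sum_eq_zero fun l _ => constantCoeff_smul_log _ _)]
    refine Finset.prod_congr rfl fun b _ => ?_
    rw [constantCoeff_expS_arg_sum _ _ (fun m _ => by
      rw [map_sum]
      exact Finset.sum_eq_zero fun l _ => constantCoeff_smul_log _ _)]
    refine Finset.prod_congr rfl fun m _ => ?_
    rw [constantCoeff_expS_arg_sum _ _ (fun l _ => constantCoeff_smul_log _ _)]
    rfl
  rw [hprod]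
  apply req_expS
  intro n hn m' hm'
  rw [coeff_mk, coeff_mk]
  -- compute the right-hand side coefficient
  have hR : coeff (R := L) m' (coeff (R := PowerSeries L) n
        (∑ b ∈ Finset.Icc 1 N, ∑ m ∈ Finset.range (M + 1), ∑ l ∈ (hfin (m * b)).toFinset,
          (-(c (m * b) l) - (l : ℚ) * (b : ℚ) * A * d (m * b) l -
            (b : ℚ) ^ 2 * B * d (m * b) l) • log (1 - mon b m l)))
      = ∑ b ∈ Finset.Icc 1 N, ∑ m ∈ Finset.range (M + 1), ∑ l ∈ (hfin (m * b)).toFinset,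
          (if b ∣ n ∧ n ≠ 0 ∧ (n / b) * m = m' then
            (-(-(c (m * b) l) - (l : ℚ) * (b : ℚ) * A * d (m * b) l -
                (b : ℚ) ^ 2 * B * d (m * b) l) / ((n / b : ℕ) : ℚ)) • T (((n / b : ℕ) : ℤ) * l)
          else 0) := by
    simp only [map_sum]
    refine Finset.sum_congr rfl fun b hb => Finset.sum_congr rfl fun m _ =>
      Finset.sum_congr rfl fun l _ => ?_
    exact coeff2_smul_log _ b m (Finset.mem_Icc.mp hb).1 l n m'
  rw [hR]
  by_cases hn0 : n = 0
  · subst hn0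
    simp
  -- now n ≠ 0
  have hL : ∑ a ∈ n.divisors.filter (· ∣ m'), (∑ᶠ l : ℤ,
        LaurentPolynomial.C
            ((c ((m' / a) * (n / a)) l +
                (((n / a : ℕ) : ℚ) * (l : ℚ) * A + ((n / a : ℕ) : ℚ) ^ 2 * B) *
                  d ((m' / a) * (n / a)) l) / (a : ℚ)) *
          T ((a : ℤ) * l))
      = ∑ a ∈ n.divisors, fdiv c d hfin A B n m' a := by
    rw [Finset.sum_filter]
    refine Finset.sum_congr rfl fun a _ => ?_
    rw [fdiv]
    by_cases ham : a ∣ m'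
    · rw [if_pos ham, if_pos ham]
      simp only [C_mul_T]
      apply finsum_eq_finset_sum_of_support_subset
      intro l hl
      simp only [Function.mem_support, ne_eq] at hl
      by_contra hnot
      apply hl
      have hc0 : c ((m' / a) * (n / a)) l = 0 ∧ d ((m' / a) * (n / a)) l = 0 := by
        have := (hfin ((m' / a) * (n / a))).mem_toFinset.not.mp (by simpa using hnot)
        simp only [Set.mem_setOf_eq, not_or, not_not] at this
        exact this
      rw [hc0.1, hc0.2]
      simp
    · rw [if_neg ham, if_neg ham]
  have step2 : ∀ b ∈ n.divisors,
      (∑ m ∈ Finset.range (M + 1), ∑ l ∈ (hfin (m * b)).toFinset,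
        (if b ∣ n ∧ n ≠ 0 ∧ (n / b) * m = m' then
          (-(-(c (m * b) l) - (l : ℚ) * (b : ℚ) * A * d (m * b) l -
              (b : ℚ) ^ 2 * B * d (m * b) l) / ((n / b : ℕ) : ℚ)) • T (((n / b : ℕ) : ℤ) * l)
        else 0))
      = fdiv c d hfin A B n m' (n / b) := by
    intro b hb
    obtain ⟨hbdvd, -⟩ := Nat.mem_divisors.mp hb
    have hb1 : 0 < b := Nat.pos_of_mem_divisors hb
    have hnk : n / (n / b) = b := Nat.div_div_self hbdvd hn0
    have hk1 : 0 < n / b := Nat.div_pos (Nat.le_of_dvd (Nat.pos_of_ne_zero hn0) hbdvd) hb1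
    simp only [fdiv, hnk]
    by_cases hkm : (n / b) ∣ m'
    · rw [if_pos hkm]
      rw [Finset.sum_eq_single_of_mem (m' / (n / b))
        (Finset.mem_range.mpr (by have := Nat.div_le_self m' (n / b); omega))]
      · refine Finset.sum_congr rfl fun l _ => ?_
        rw [if_pos ⟨hbdvd, hn0, Nat.mul_div_cancel' hkm⟩]
        congr 1
        ring
      · intro m _ hm
        refine Finset.sum_eq_zero fun l _ => ?_
        rw [if_neg]
        rintro ⟨-, -, hc⟩
        exact hm (by rw [← hc, Nat.mul_div_cancel_left m hk1])
    · rw [if_neg hkm]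
      refine Finset.sum_eq_zero fun m _ => Finset.sum_eq_zero fun l _ => ?_
      rw [if_neg]
      rintro ⟨-, -, hc⟩
      exact hkm ⟨m, hc.symm⟩
  have hRa : ∑ b ∈ Finset.Icc 1 N, ∑ m ∈ Finset.range (M + 1), ∑ l ∈ (hfin (m * b)).toFinset,
        (if b ∣ n ∧ n ≠ 0 ∧ (n / b) * m = m' then
          (-(-(c (m * b) l) - (l : ℚ) * (b : ℚ) * A * d (m * b) l -
              (b : ℚ) ^ 2 * B * d (m * b) l) / ((n / b : ℕ) : ℚ)) • T (((n / b : ℕ) : ℤ) * l)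
        else 0)
      = ∑ b ∈ n.divisors, fdiv c d hfin A B n m' (n / b) := by
    rw [← Finset.sum_subset (fun b hb => Finset.mem_Icc.mpr
        ⟨Nat.pos_of_mem_divisors hb, le_trans (Nat.divisor_le hb) hn⟩)
      (fun b _ hb => Finset.sum_eq_zero fun m _ => Finset.sum_eq_zero fun l _ => by
        rw [if_neg]
        rintro ⟨h1, h2, -⟩
        exact hb (Nat.mem_divisors.mpr ⟨h1, h2⟩))]
    exact Finset.sum_congr rfl step2
  rw [hL, hRa, Nat.sum_div_divisors n (fdiv c d hfin A B n m')]

end Formal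
end
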